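/- Let H be a connected finite simple graph with |H| ≥ 3 that is triangle-free (the cycle C_3 is not induced-contained in H) and has no pendant vertices. Then for every vertex v of H, the interval [H, D_v(H)] is disconnected. -/

import Mathlib

open SimpleGraph

/-- A finite simple graph, encoded by its number of vertices together with a
simple graph structure on `Fin n`. -/
def FinGraph : Type := Σ n : ℕ, SimpleGraph (Fin n)

namespace FinGraph

/-- The number of vertices of a graph. -/
def order (G : FinGraph) : ℕ := G.1

/-- Induced containment `H ⊴ G`: there is an injection of the vertices of `H`
into the vertices of `G` which preserves and reflects adjacency (equivalently,
`H` is isomorphic to an induced subgraph of `G`). -/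
def Contains (H G : FinGraph) : Prop :=
  ∃ f : Fin H.1 ↪ Fin G.1, ∀ a b : Fin H.1, G.2.Adj (f a) (f b) ↔ H.2.Adj a b

/-- Isomorphism of finite graphs. -/
def Iso (H G : FinGraph) : Prop := Nonempty (H.2 ≃g G.2)

/-- Package a simple graph on an arbitrary finite vertex type as a `FinGraph`. -/
noncomputable def of {V : Type} [Fintype V] (G : SimpleGraph V) : FinGraph :=
  ⟨Fintype.card V, G.comap ⇑(Fintype.equivFin V).symm⟩

end FinGraph

/-- `X` lies strictly between `H` and `G` in the induced containment order. -/
def StrictlyBetween (H G X : FinGraph) : Prop :=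
  H.Contains X ∧ X.Contains G ∧ ¬ X.Iso H ∧ ¬ X.Iso G

/-- The interval `[H,G]` is disconnected: the collection of graphs lying strictly
between `H` and `G` splits into two nonempty disjoint classes, each closed under
isomorphism and jointly exhaustive, such that no member of one class is
induced-contained in a member of the other. -/
def IntervalDisconnected (H G : FinGraph) : Prop :=
  ∃ A B : Set FinGraph,
    A.Nonempty ∧ B.Nonempty ∧ Disjoint A B ∧
    (∀ X : FinGraph, X ∈ A ∪ B ↔ StrictlyBetween H G X) ∧
    (∀ X ∈ A, ∀ Y : FinGraph, X.Iso Y → Y ∈ A) ∧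
    (∀ X ∈ B, ∀ Y : FinGraph, X.Iso Y → Y ∈ B) ∧
    (∀ X ∈ A, ∀ Y ∈ B, ¬ X.Contains Y ∧ ¬ Y.Contains X)

/-- `D_v(H)`: two disjoint copies of `H` with every vertex of the second copy
joined to the vertex `v` of the first copy. -/
def Dv {V : Type} (H : SimpleGraph V) (v : V) : SimpleGraph (Fin 2 × V) where
  Adj x y := (x.1 = y.1 ∧ H.Adj x.2 y.2) ∨ (x = (0, v) ∧ y.1 = 1) ∨ (y = (0, v) ∧ x.1 = 1)
  symm := by
    constructor
    rintro x y (⟨h1, h2⟩ | h | h)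
    · exact Or.inl ⟨h1.symm, h2.symm⟩
    · exact Or.inr (Or.inr h)
    · exact Or.inr (Or.inl h)
  loopless := by
    constructor
    rintro x (⟨-, h⟩ | ⟨h1, h2⟩ | ⟨h1, h2⟩)
    · exact H.loopless.irrefl _ h
    · rw [h1] at h2; simp at h2
    · rw [h1] at h2; simp at h2

namespace IntervalDv

lemma fin2 (i : Fin 2) : i = 0 ∨ i = 1 := by omega

variable {n : ℕ} {G : SimpleGraph (Fin n)} {v : Fin n}

lemma dv_adj (x y : Fin 2 × Fin n) :
    (Dv G v).Adj x y ↔ ((x.1 = y.1 ∧ G.Adj x.2 y.2) ∨ (x = (0, v) ∧ y.1 = 1) ∨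
      (y = (0, v) ∧ x.1 = 1)) := Iff.rfl

lemma contains_iff {X Y : FinGraph} : X.Contains Y ↔ Nonempty (X.2 ↪g Y.2) := by
  constructor
  · rintro ⟨f, hf⟩; exact ⟨⟨f, fun {a b} => hf a b⟩⟩
  · rintro ⟨f⟩; exact ⟨f.toEmbedding, fun a b => f.map_adj_iff⟩

lemma iso_order {X Y : FinGraph} (h : X.Iso Y) : X.1 = Y.1 := by
  obtain ⟨e⟩ := h
  simpa using Fintype.card_congr e.toEquiv

lemma exists_adj_cross {W : Type*} {K : SimpleGraph W} {P : W → Prop}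
    {a b : W} (w : K.Walk a b) (ha : P a) (hb : ¬ P b) :
    ∃ x y, K.Adj x y ∧ P x ∧ ¬ P y := by
  classical
  induction w with
  | nil => exact absurd ha hb
  | @cons u c b h p ih =>
    by_cases hc : P c
    · exact ih hc hb
    · exact ⟨u, c, h, ha, hc⟩

lemma fullcopy (hconn : G.Connected)
    (htri : ∀ a b c, G.Adj a b → G.Adj a c → G.Adj b c → False)
    (hpend : ∀ u : Fin n, (G.neighborSet u).ncard ≠ 1)
    (f : G ↪g Dv G v) :
    (∀ x, (f x).1 = 0) ∨ (∀ x, (f x).1 = 1) := by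
  by_contra hcon
  push_neg at hcon
  obtain ⟨⟨a, ha⟩, ⟨b, hb⟩⟩ := hcon
  have ha1 : (f a).1 = 1 := by rcases fin2 (f a).1 with h | h <;> simp_all
  have hb1 : ¬ ((f b).1 = 1) := by rcases fin2 (f b).1 with h | h <;> simp_all
  obtain ⟨w⟩ := hconn.preconnected a b
  obtain ⟨p, q, hpq, hp1, hq1⟩ := exists_adj_cross (P := fun x => (f x).1 = 1) w ha1 hb1
  have hq0 : (f q).1 = 0 := by rcases fin2 (f q).1 with h | h <;> simp_all
  have hD : (Dv G v).Adj (f p) (f q) := f.map_adj_iff.mpr hpq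
  rcases (dv_adj _ _).mp hD with ⟨h1, -⟩ | ⟨h1, -⟩ | ⟨h1, h2⟩
  · rw [hp1, hq0] at h1; exact absurd h1 (by decide)
  · rw [h1] at hp1; simp at hp1
  · -- h1 : f q = (0, v)
    have key : ∀ z, G.Adj z p → z = q := by
      intro z hz
      have hDz : (Dv G v).Adj (f z) (f p) := f.map_adj_iff.mpr hz
      rcases (dv_adj _ _).mp hDz with ⟨e1, -⟩ | ⟨e1, -⟩ | ⟨e1, e2⟩
      · -- (f z).1 = (f p).1 = 1
        have hz1 : (f z).1 = 1 := by rw [e1, hp1]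
        have hqz : (Dv G v).Adj (f q) (f z) := by
          rw [h1]; exact Or.inr (Or.inl ⟨rfl, hz1⟩)
        have h3 : G.Adj q z := f.map_adj_iff.mp hqz
        exact absurd (htri q z p h3 hpq.symm hz) (fun h => h)
      · exact f.injective (e1.trans h1.symm)
      · rw [e1] at hp1; simp at hp1
    have hNp : G.neighborSet p = {q} := by
      apply Set.eq_singleton_iff_unique_mem.mpr
      exact ⟨hpq, fun z hzmem => key z (G.adj_symm hzmem)⟩
    exact hpend p (by rw [hNp]; exact Set.ncard_singleton q)

end IntervalDv
namespace IntervalDv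
variable {n : ℕ} {G : SimpleGraph (Fin n)} {v : Fin n}

lemma fullcopy_range (f : G ↪g Dv G v) {i : Fin 2} (h : ∀ x, (f x).1 = i) :
    ∀ y, (i, y) ∈ Set.range ⇑f := by
  have hinj : Function.Injective (fun x => (f x).2) := by
    intro a b hab
    exact f.injective (Prod.ext ((h a).trans (h b).symm) hab)
  have hsurj := Finite.injective_iff_surjective.mp hinj
  intro y
  obtain ⟨x, hx⟩ := hsurj y
  exact ⟨x, Prod.ext (h x) hx⟩

lemma pullback {α β γ : Type*} {A : SimpleGraph α} {B : SimpleGraph β} {C : SimpleGraph γ}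
    (f : A ↪g C) (u : B ↪g C) (h : ∀ b, u b ∈ Set.range ⇑f) : Nonempty (B ↪g A) := by
  classical
  have hg : ∀ b, ∃ a, f a = u b := fun b => (h b)
  choose g hgspec using hg
  have hginj : Function.Injective g := by
    intro b b' hb
    apply u.injective
    rw [← hgspec b, ← hgspec b', hb]
  refine ⟨⟨⟨g, hginj⟩, ?_⟩⟩
  intro b b'
  show A.Adj (g b) (g b') ↔ B.Adj b b'
  constructor
  · intro hA
    exact u.map_adj_iff.mp (by rw [← hgspec b, ← hgspec b']; exact f.map_adj_iff.mpr hA)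
  · intro hB
    apply f.map_adj_iff.mp
    rw [hgspec b, hgspec b']
    exact u.map_adj_iff.mpr hB

def sideMap (n : ℕ) (i : Fin 2) (x : Fin n) : Fin (n+1) → Fin 2 × Fin n :=
  fun j => if h : (j : ℕ) < n then (i, ⟨j, h⟩) else (1 - i, x)

lemma sideMap_castSucc (i : Fin 2) (x : Fin n) (a : Fin n) :
    sideMap n i x a.castSucc = (i, a) := by
  simp [sideMap, a.is_lt]

lemma sideMap_last (i : Fin 2) (x : Fin n) :
    sideMap n i x (Fin.last n) = (1 - i, x) := by
  simp [sideMap]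

lemma one_sub_ne (i : Fin 2) : 1 - i ≠ i := by fin_cases i <;> decide

lemma sideMap_injective (i : Fin 2) (x : Fin n) : Function.Injective (sideMap n i x) := by
  intro a b hab
  unfold sideMap at hab
  split_ifs at hab with h1 h2 h2
  · apply Fin.ext
    have := congrArg Prod.snd hab
    simpa [Fin.ext_iff] using this
  · exact absurd (congrArg Prod.fst hab).symm (one_sub_ne i)
  · exact absurd (congrArg Prod.fst hab) (one_sub_ne i)
  · apply Fin.ext; omega

def subG (G : SimpleGraph (Fin n)) (v : Fin n) (i : Fin 2) (x : Fin n) : FinGraph :=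
  ⟨n+1, (Dv G v).comap (sideMap n i x)⟩

def embSub (i : Fin 2) (x : Fin n) : (subG G v i x).2 ↪g Dv G v :=
  SimpleGraph.Embedding.comap ⟨sideMap n i x, sideMap_injective i x⟩ (Dv G v)

lemma embSub_apply (i : Fin 2) (x : Fin n) (a : Fin (n+1)) :
    embSub (G := G) (v := v) i x a = sideMap n i x a := rfl

def inG (i : Fin 2) (x : Fin n) : G ↪g (subG G v i x).2 where
  toFun := Fin.castSucc
  inj' := Fin.castSucc_injective n
  map_rel_iff' := by
    intro a b
    show (Dv G v).Adj (sideMap n i x a.castSucc) (sideMap n i x b.castSucc) ↔ G.Adj a b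
    rw [sideMap_castSucc, sideMap_castSucc, dv_adj]
    constructor
    · rintro (⟨-, h⟩ | ⟨h1, h2⟩ | ⟨h1, h2⟩)
      · exact h
      · rw [(Prod.ext_iff.mp h1).1] at h2; simp at h2
      · rw [(Prod.ext_iff.mp h1).1] at h2; simp at h2
    · intro h; exact Or.inl ⟨rfl, h⟩

def AF (G : SimpleGraph (Fin n)) (v : Fin n) (X : FinGraph) : Prop :=
  ∃ f : X.2 ↪g Dv G v, ∀ y, (1, y) ∈ Set.range ⇑f

def BF (G : SimpleGraph (Fin n)) (v : Fin n) (X : FinGraph) : Prop :=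
  ∃ f : X.2 ↪g Dv G v, ∀ y, (0, y) ∈ Set.range ⇑f

def PP (G : SimpleGraph (Fin n)) (v : Fin n) (X : FinGraph) : Prop :=
  ∃ x : Fin n, (subG G v 1 x).Contains X

end IntervalDv
namespace IntervalDv
variable {n : ℕ} {G : SimpleGraph (Fin n)} {v : Fin n}

lemma strict_form (hconn : G.Connected)
    (htri : ∀ a b c, G.Adj a b → G.Adj a c → G.Adj b c → False)
    (hpend : ∀ u : Fin n, (G.neighborSet u).ncard ≠ 1)
    {X : FinGraph} (h1 : Nonempty (G ↪g X.2)) (h2 : Nonempty (X.2 ↪g Dv G v)) :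
    AF G v X ∨ BF G v X := by
  obtain ⟨h⟩ := h1
  obtain ⟨f⟩ := h2
  rcases fullcopy hconn htri hpend (h.trans f) with h0 | h0
  · right
    exact ⟨f, fun y => by
      obtain ⟨z, hz⟩ := fullcopy_range (h.trans f) h0 y
      exact ⟨h z, hz⟩⟩
  · left
    exact ⟨f, fun y => by
      obtain ⟨z, hz⟩ := fullcopy_range (h.trans f) h0 y
      exact ⟨h z, hz⟩⟩

lemma af_P {X : FinGraph} (hno : ¬ Nonempty (X.2 ≃g G))
    (hH : Nonempty (G ↪g X.2)) (hAF : AF G v X) : PP G v X := by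
  obtain ⟨f, hf⟩ := hAF
  obtain ⟨h⟩ := hH
  have hx : ∃ w, (f w).1 = 0 := by
    by_contra hc
    push_neg at hc
    have hall : ∀ w, (f w).1 = 1 := by
      intro w; rcases fin2 (f w).1 with h' | h' <;> simp_all
    have hinj : Function.Injective (fun w => (f w).2) := by
      intro a b hab
      exact f.injective (Prod.ext ((hall a).trans (hall b).symm) hab)
    have hle : X.1 ≤ n := by
      have := Fintype.card_le_of_injective _ hinj
      simpa using this
    have hge : n ≤ X.1 := by
      have := Fintype.card_le_of_injective _ h.injective
      simpa using this
    have hbij : Function.Bijective ⇑h := by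
      rw [Fintype.bijective_iff_injective_and_card]
      exact ⟨h.injective, by simp; omega⟩
    exact hno ⟨(RelIso.mk (Equiv.ofBijective _ hbij) (fun {a b} => h.map_adj_iff)).symm⟩
  obtain ⟨w, hw⟩ := hx
  refine ⟨(f w).2, contains_iff.mpr ?_⟩
  apply pullback f (embSub 1 (f w).2)
  intro b
  change sideMap n 1 (f w).2 b ∈ Set.range ⇑f
  by_cases hb : (b : ℕ) < n
  · have : sideMap n 1 (f w).2 b = (1, ⟨b, hb⟩) := by simp [sideMap, hb]
    rw [this]; exact hf _
  · have : sideMap n 1 (f w).2 b = (0, (f w).2) := by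
      simp [sideMap, hb]
    rw [this]
    exact ⟨w, Prod.ext hw rfl⟩

lemma exists_ne_of_three (h3 : 3 ≤ n) (v : Fin n) : ∃ y : Fin n, y ≠ v := by
  have h0 : (0:ℕ) < n := by omega
  have h1 : (1:ℕ) < n := by omega
  by_cases hv : v = ⟨0, h0⟩
  · exact ⟨⟨1, h1⟩, by rw [hv]; simp [Fin.ext_iff]⟩
  · exact ⟨⟨0, h0⟩, fun hc => hv hc.symm⟩

lemma bf_notP (h3 : 3 ≤ n) (hconn : G.Connected)
    (htri : ∀ a b c, G.Adj a b → G.Adj a c → G.Adj b c → False)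
    (hpend : ∀ u : Fin n, (G.neighborSet u).ncard ≠ 1)
    {X : FinGraph} (hnoD : ¬ Nonempty (X.2 ≃g Dv G v)) (hBF : BF G v X) :
    ¬ PP G v X := by
  obtain ⟨f, hf⟩ := hBF
  have hmiss : ∃ t, (1, t) ∉ Set.range ⇑f := by
    by_contra hc
    push_neg at hc
    have hsurj : Function.Surjective ⇑f := by
      rintro ⟨i, y⟩
      rcases fin2 i with rfl | rfl
      · exact hf y
      · exact hc y
    exact hnoD ⟨RelIso.mk (Equiv.ofBijective _ ⟨f.injective, hsurj⟩)
      (fun {a b} => f.map_adj_iff)⟩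
  obtain ⟨t, ht⟩ := hmiss
  rintro ⟨x, hcont⟩
  obtain ⟨u⟩ := contains_iff.mp hcont
  set w : (subG G v 1 x).2 ↪g Dv G v := u.trans f with hw
  set g0 : G ↪g Dv G v := (inG 1 x).trans w with hg0
  have hg0app : ∀ z, g0 z = w (Fin.castSucc z) := fun z => rfl
  rcases fullcopy hconn htri hpend g0 with hc0 | hc1
  · -- H-copy goes to copy 0
    set s : Fin (n+1) := Fin.last n with hs
    have hws1 : (w s).1 = 1 := by
      rcases fin2 (w s).1 with h' | h'
      · exfalso
        obtain ⟨z, hz⟩ := fullcopy_range g0 hc0 ((w s).2)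
        have : w (Fin.castSucc z) = w s := by
          rw [← hg0app, hz]; exact Prod.ext h'.symm rfl
        have := w.injective this
        have := congrArg Fin.val this
        simp [hs] at this
        omega
      · exact h'
    by_cases hx : x = v
    · obtain ⟨y, hy⟩ := exists_ne_of_three h3 v
      obtain ⟨z1, hz1⟩ := fullcopy_range g0 hc0 y
      have hadj : (subG G v 1 x).2.Adj s (Fin.castSucc z1) := by
        show (Dv G v).Adj (sideMap n 1 x s) (sideMap n 1 x (Fin.castSucc z1))
        rw [hs, sideMap_last, sideMap_castSucc]
        have h10 : (1 - 1 : Fin 2) = 0 := by decide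
        rw [h10, hx]
        exact Or.inr (Or.inl ⟨rfl, rfl⟩)
      have hD : (Dv G v).Adj (w s) (w (Fin.castSucc z1)) := w.map_adj_iff.mpr hadj
      rw [← hg0app, hz1] at hD
      rcases (dv_adj _ _).mp hD with ⟨e1, -⟩ | ⟨e1, -⟩ | ⟨e1, e2⟩
      · rw [hws1] at e1; simp at e1
      · rw [e1] at hws1; simp at hws1
      · exact hy (congrArg Prod.snd e1)
    · obtain ⟨z0, hz0⟩ := fullcopy_range g0 hc0 v
      have hD : (Dv G v).Adj (w s) (w (Fin.castSucc z0)) := by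
        rw [← hg0app, hz0]
        exact Or.inr (Or.inr ⟨rfl, hws1⟩)
      have hadj : (subG G v 1 x).2.Adj s (Fin.castSucc z0) := w.map_adj_iff.mp hD
      have : (Dv G v).Adj (sideMap n 1 x s) (sideMap n 1 x (Fin.castSucc z0)) := hadj
      rw [hs, sideMap_last, sideMap_castSucc] at this
      have h10 : (1 - 1 : Fin 2) = 0 := by decide
      rw [h10] at this
      rcases (dv_adj _ _).mp this with ⟨e1, -⟩ | ⟨e1, -⟩ | ⟨e1, e2⟩
      · simp at e1
      · exact hx (Prod.ext_iff.mp e1).2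
      · simp at e2
  · obtain ⟨z, hz⟩ := fullcopy_range g0 hc1 t
    exact ht ⟨u (Fin.castSucc z), hz⟩

lemma af_down (hconn : G.Connected)
    (htri : ∀ a b c, G.Adj a b → G.Adj a c → G.Adj b c → False)
    (hpend : ∀ u : Fin n, (G.neighborSet u).ncard ≠ 1)
    {X Y : FinGraph} (hnoD : ¬ Nonempty (X.2 ≃g Dv G v))
    (hAFX : AF G v X) (hHY : Nonempty (G ↪g Y.2)) (hYX : Nonempty (Y.2 ↪g X.2)) :
    AF G v Y := by
  obtain ⟨f, hf⟩ := hAFX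
  obtain ⟨hy⟩ := hHY
  obtain ⟨g⟩ := hYX
  have hmiss : ∃ t, (0, t) ∉ Set.range ⇑f := by
    by_contra hc
    push_neg at hc
    have hsurj : Function.Surjective ⇑f := by
      rintro ⟨i, y⟩
      rcases fin2 i with rfl | rfl
      · exact hc y
      · exact hf y
    exact hnoD ⟨RelIso.mk (Equiv.ofBijective _ ⟨f.injective, hsurj⟩)
      (fun {a b} => f.map_adj_iff)⟩
  obtain ⟨t, ht⟩ := hmiss
  set g0 : G ↪g Dv G v := hy.trans (g.trans f) with hg0
  rcases fullcopy hconn htri hpend g0 with h0 | h1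
  · obtain ⟨z, hz⟩ := fullcopy_range g0 h0 t
    exact absurd ⟨g (hy z), hz⟩ ht
  · exact ⟨g.trans f, fun y => by
      obtain ⟨z, hz⟩ := fullcopy_range g0 h1 y
      exact ⟨hy z, hz⟩⟩

end IntervalDv

namespace IntervalDv

lemma contains_trans {X Y Z : FinGraph} (h1 : X.Contains Y) (h2 : Y.Contains Z) :
    X.Contains Z := by
  obtain ⟨f⟩ := contains_iff.mp h1
  obtain ⟨g⟩ := contains_iff.mp h2
  exact contains_iff.mpr ⟨f.trans g⟩

lemma contains_of_iso {X Y : FinGraph} (h : X.Iso Y) : X.Contains Y := by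
  obtain ⟨e⟩ := h
  exact contains_iff.mpr ⟨e.toRelEmbedding⟩

lemma iso_symm {X Y : FinGraph} (h : X.Iso Y) : Y.Iso X := by
  obtain ⟨e⟩ := h; exact ⟨e.symm⟩

lemma iso_trans {X Y Z : FinGraph} (h1 : X.Iso Y) (h2 : Y.Iso Z) : X.Iso Z := by
  obtain ⟨e⟩ := h1; obtain ⟨e'⟩ := h2; exact ⟨e.trans e'⟩

noncomputable def isoOf {V : Type} [Fintype V] (W : SimpleGraph V) :
    (FinGraph.of W).2 ≃g W :=
  SimpleGraph.Iso.comap (Fintype.equivFin V).symm W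

lemma order_of {V : Type} [Fintype V] (W : SimpleGraph V) :
    (FinGraph.of W).1 = Fintype.card V := rfl

end IntervalDv


open IntervalDv

/-- For a connected graph `H` with at least `3` vertices, no induced triangle and
no pendant vertices, the interval `[H, D_v(H)]` is disconnected for every vertex `v`. -/
theorem interval_Dv_disconnected (H : FinGraph) (hconn : H.2.Connected)
    (hcard : 3 ≤ H.order)
    (htriangleFree : ¬ FinGraph.Contains ⟨3, SimpleGraph.cycleGraph 3⟩ H)
    (hpendantFree : ∀ u : Fin H.1, (H.2.neighborSet u).ncard ≠ 1)
    (v : Fin H.1) :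
    IntervalDisconnected H (FinGraph.of (Dv H.2 v)) := by
  classical
  obtain ⟨n, G⟩ := H
  simp only [FinGraph.order] at hcard
  -- hcard : 3 ≤ n (need to check)
  set D' : FinGraph := FinGraph.of (Dv G v) with hD'
  have isoD : D'.2 ≃g Dv G v := isoOf (Dv G v)
  have horderD : D'.1 = 2 * n := by
    rw [hD', order_of]; simp
  have htri : ∀ a b c, G.Adj a b → G.Adj a c → G.Adj b c → False := by
    intro a b c hab hac hbc
    apply htriangleFree
    refine ⟨⟨![a, b, c], ?_⟩, ?_⟩
    · intro i j hij
      fin_cases i <;> fin_cases j <;> simp_all <;>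
        first
          | exact hab.ne (by simpa using hij)
          | exact hac.ne (by simpa using hij)
          | exact hbc.ne (by simpa using hij)
          | exact hab.ne (by simpa using hij.symm)
          | exact hac.ne (by simpa using hij.symm)
          | exact hbc.ne (by simpa using hij.symm)
    · intro i j
      fin_cases i <;> fin_cases j <;>
        first
          | exact iff_of_false (G.loopless.irrefl _) (by decide)
          | exact iff_of_true hab (by decide)
          | exact iff_of_true hab.symm (by decide)
          | exact iff_of_true hac (by decide)
          | exact iff_of_true hac.symm (by decide)
          | exact iff_of_true hbc (by decide)
          | exact iff_of_true hbc.symm (by decide)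
  -- basic strictness facts for subG
  have hsub_strict : ∀ (i : Fin 2) (x : Fin n),
      StrictlyBetween ⟨n, G⟩ D' (subG G v i x) := by
    intro i x
    refine ⟨contains_iff.mpr ⟨inG i x⟩,
      contains_iff.mpr ⟨(embSub i x).trans isoD.symm.toRelEmbedding⟩, ?_, ?_⟩
    · intro hiso
      have := iso_order hiso
      simp [subG] at this
    · intro hiso
      have := iso_order hiso
      rw [horderD] at this
      simp [subG] at this
      omega
  have hnoisoDv : ∀ {X : FinGraph}, StrictlyBetween ⟨n, G⟩ D' X →
      ¬ Nonempty (X.2 ≃g Dv G v) := by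
    intro X hX ⟨e⟩
    exact hX.2.2.2 ⟨e.trans isoD.symm⟩
  have hembDv : ∀ {X : FinGraph}, StrictlyBetween ⟨n, G⟩ D' X →
      Nonempty (X.2 ↪g Dv G v) := by
    intro X hX
    obtain ⟨f⟩ := contains_iff.mp hX.2.1
    exact ⟨f.trans isoD.toRelEmbedding⟩
  have hAFof : ∀ {X : FinGraph}, StrictlyBetween ⟨n, G⟩ D' X → PP G v X → AF G v X := by
    intro X hX hP
    rcases strict_form hconn htri hpendantFree (contains_iff.mp hX.1) (hembDv hX) with h | h
    · exact h
    · exact absurd hP (bf_notP hcard hconn htri hpendantFree (hnoisoDv hX) h)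
  refine ⟨{X | StrictlyBetween ⟨n, G⟩ D' X ∧ PP G v X},
          {X | StrictlyBetween ⟨n, G⟩ D' X ∧ ¬ PP G v X}, ?_, ?_, ?_, ?_, ?_, ?_, ?_⟩
  · exact ⟨subG G v 1 v, hsub_strict 1 v, ⟨v, contains_iff.mpr ⟨RelEmbedding.refl _⟩⟩⟩
  · refine ⟨subG G v 0 v, hsub_strict 0 v, ?_⟩
    apply bf_notP hcard hconn htri hpendantFree (hnoisoDv (hsub_strict 0 v))
    exact ⟨embSub 0 v, fun y => ⟨Fin.castSucc y, sideMap_castSucc 0 v y⟩⟩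
  · rw [Set.disjoint_left]
    rintro X ⟨-, hP⟩ ⟨-, hnP⟩
    exact hnP hP
  · intro X
    constructor
    · rintro (⟨h, -⟩ | ⟨h, -⟩) <;> exact h
    · intro h
      by_cases hP : PP G v X
      · exact Or.inl ⟨h, hP⟩
      · exact Or.inr ⟨h, hP⟩
  · rintro X ⟨hX, hP⟩ Y hiso
    refine ⟨⟨contains_trans hX.1 (contains_of_iso hiso),
      contains_trans (contains_of_iso (iso_symm hiso)) hX.2.1,
      fun h => hX.2.2.1 (iso_trans hiso h),
      fun h => hX.2.2.2 (iso_trans hiso h)⟩, ?_⟩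
    obtain ⟨x, hc⟩ := hP
    exact ⟨x, contains_trans hc (contains_of_iso hiso)⟩
  · rintro X ⟨hX, hnP⟩ Y hiso
    refine ⟨⟨contains_trans hX.1 (contains_of_iso hiso),
      contains_trans (contains_of_iso (iso_symm hiso)) hX.2.1,
      fun h => hX.2.2.1 (iso_trans hiso h),
      fun h => hX.2.2.2 (iso_trans hiso h)⟩, ?_⟩
    rintro ⟨x, hc⟩
    exact hnP ⟨x, contains_trans hc (contains_of_iso (iso_symm hiso))⟩
  · rintro X ⟨hX, hPX⟩ Y ⟨hY, hnPY⟩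
    constructor
    · intro h
      obtain ⟨x, hc⟩ := hPX
      exact hnPY ⟨x, contains_trans hc h⟩
    · intro h
      have hAFX : AF G v X := hAFof hX hPX
      have hAFY : AF G v Y := af_down hconn htri hpendantFree (hnoisoDv hX) hAFX
        (contains_iff.mp hY.1) (contains_iff.mp h)
      have : PP G v Y := af_P (fun ⟨e⟩ => hY.2.2.1 ⟨e⟩) (contains_iff.mp hY.1) hAFY
      exact hnPY this
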